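/- arXiv:2011.08933 — 3 statements merged into one kernel-verified Lean document; each statement's English description precedes it below -/
import Mathlib

section
/- Suppose E₁ ∩ E₂ = ∅. Then the problem of minimizing ‖x₁ − x₂‖ over (x₁, x₂) ∈ E₁ × E₂ has a unique optimal solution: if (x₁*, x₂*) and (x₁', x₂') both belong to E₁ × E₂ and both minimize ‖x₁ − x₂‖ over E₁ × E₂, then x₁* = x₁' and x₂* = x₂'. -/
open Matrix

private lemma quad_pos {d : ℕ} {Q : Matrix (Fin d) (Fin d) ℝ} (hQ : Q.PosDef)
    {x : EuclideanSpace ℝ (Fin d)} (hx : x ≠ 0) :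
    0 < (inner ℝ x (Matrix.toEuclideanLin Q x) : ℝ) := by
  rw [EuclideanSpace.inner_eq_star_dotProduct, Matrix.ofLp_toEuclideanLin_apply, dotProduct_comm]
  refine hQ.dotProduct_mulVec_pos fun h => hx ?_
  have := congrArg (WithLp.equiv 2 (Fin d → ℝ)).symm h
  simpa using this

private lemma quad_nonneg {d : ℕ} {Q : Matrix (Fin d) (Fin d) ℝ} (hQ : Q.PosDef)
    (x : EuclideanSpace ℝ (Fin d)) :
    0 ≤ (inner ℝ x (Matrix.toEuclideanLin Q x) : ℝ) := by
  by_cases hx : x = 0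
  · simp [hx]
  · exact (quad_pos hQ hx).le

private lemma quad_mid {d : ℕ} (T : EuclideanSpace ℝ (Fin d) →ₗ[ℝ] EuclideanSpace ℝ (Fin d))
    (a b : EuclideanSpace ℝ (Fin d)) :
    (inner ℝ ((2⁻¹:ℝ) • (a + b)) (T ((2⁻¹:ℝ) • (a + b))) : ℝ)
      = ((inner ℝ a (T a) : ℝ) + (inner ℝ b (T b) : ℝ)) / 2
        - (inner ℝ ((2⁻¹:ℝ) • (a - b)) (T ((2⁻¹:ℝ) • (a - b))) : ℝ) := by
  simp only [_root_.map_smul, map_add, map_sub, real_inner_smul_left, real_inner_smul_right,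
    inner_add_left, inner_add_right, inner_sub_left, inner_sub_right]
  ring

set_option maxHeartbeats 1000000 in
/-- if the two ellipsoids are disjoint, the pair of nearest points is unique. -/
theorem stmt_8 (d : ℕ)
    (Q₁ Q₂ : Matrix (Fin d) (Fin d) ℝ) (hQ₁ : Q₁.PosDef) (hQ₂ : Q₂.PosDef)
    (z₁ z₂ : EuclideanSpace ℝ (Fin d))
    (hdisj : {x : EuclideanSpace ℝ (Fin d) |
        (inner ℝ (x - z₁) (Matrix.toEuclideanLin Q₁ (x - z₁)) : ℝ) ≤ 1} ∩
      {x : EuclideanSpace ℝ (Fin d) |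
        (inner ℝ (x - z₂) (Matrix.toEuclideanLin Q₂ (x - z₂)) : ℝ) ≤ 1} = ∅)
    (x₁s x₂s x₁' x₂' : EuclideanSpace ℝ (Fin d))
    (hx₁s : (inner ℝ (x₁s - z₁) (Matrix.toEuclideanLin Q₁ (x₁s - z₁)) : ℝ) ≤ 1)
    (hx₂s : (inner ℝ (x₂s - z₂) (Matrix.toEuclideanLin Q₂ (x₂s - z₂)) : ℝ) ≤ 1)
    (hx₁' : (inner ℝ (x₁' - z₁) (Matrix.toEuclideanLin Q₁ (x₁' - z₁)) : ℝ) ≤ 1)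
    (hx₂' : (inner ℝ (x₂' - z₂) (Matrix.toEuclideanLin Q₂ (x₂' - z₂)) : ℝ) ≤ 1)
    (hopt : ∀ x₁ x₂ : EuclideanSpace ℝ (Fin d),
      (inner ℝ (x₁ - z₁) (Matrix.toEuclideanLin Q₁ (x₁ - z₁)) : ℝ) ≤ 1 →
      (inner ℝ (x₂ - z₂) (Matrix.toEuclideanLin Q₂ (x₂ - z₂)) : ℝ) ≤ 1 →
      ‖x₁s - x₂s‖ ≤ ‖x₁ - x₂‖)
    (hopt' : ∀ x₁ x₂ : EuclideanSpace ℝ (Fin d),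
      (inner ℝ (x₁ - z₁) (Matrix.toEuclideanLin Q₁ (x₁ - z₁)) : ℝ) ≤ 1 →
      (inner ℝ (x₂ - z₂) (Matrix.toEuclideanLin Q₂ (x₂ - z₂)) : ℝ) ≤ 1 →
      ‖x₁' - x₂'‖ ≤ ‖x₁ - x₂‖) :
    x₁s = x₁' ∧ x₂s = x₂' := by
  classical
  set T₁ := Matrix.toEuclideanLin Q₁ with hT₁
  set T₂ := Matrix.toEuclideanLin Q₂ with hT₂
  -- the two optimal values are equal
  have hD' : ‖x₁' - x₂'‖ = ‖x₁s - x₂s‖ :=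
    le_antisymm (hopt' _ _ hx₁s hx₂s) (hopt _ _ hx₁' hx₂')
  -- midpoints
  set m₁ : EuclideanSpace ℝ (Fin d) := (2⁻¹:ℝ) • (x₁s + x₁') with hm₁def
  set m₂ : EuclideanSpace ℝ (Fin d) := (2⁻¹:ℝ) • (x₂s + x₂') with hm₂def
  have hm₁z : m₁ - z₁ = (2⁻¹:ℝ) • ((x₁s - z₁) + (x₁' - z₁)) := by
    rw [hm₁def]; module
  have hm₂z : m₂ - z₂ = (2⁻¹:ℝ) • ((x₂s - z₂) + (x₂' - z₂)) := by
    rw [hm₂def]; module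
  have hm₁mem : (inner ℝ (m₁ - z₁) (T₁ (m₁ - z₁)) : ℝ) ≤ 1 := by
    rw [hm₁z, quad_mid]
    have := quad_nonneg hQ₁ ((2⁻¹:ℝ) • ((x₁s - z₁) - (x₁' - z₁)))
    rw [← hT₁] at this
    linarith
  have hm₂mem : (inner ℝ (m₂ - z₂) (T₂ (m₂ - z₂)) : ℝ) ≤ 1 := by
    rw [hm₂z, quad_mid]
    have := quad_nonneg hQ₂ ((2⁻¹:ℝ) • ((x₂s - z₂) - (x₂' - z₂)))
    rw [← hT₂] at this
    linarith
  -- equality in triangle inequality forces equal difference vectors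
  have hmdiff : m₁ - m₂ = (2⁻¹:ℝ) • ((x₁s - x₂s) + (x₁' - x₂')) := by
    rw [hm₁def, hm₂def]; module
  have hlow : ‖x₁s - x₂s‖ ≤ ‖m₁ - m₂‖ := hopt _ _ hm₁mem hm₂mem
  have hup : ‖m₁ - m₂‖ ≤ ‖x₁s - x₂s‖ := by
    rw [hmdiff, norm_smul]
    calc ‖(2⁻¹:ℝ)‖ * ‖(x₁s - x₂s) + (x₁' - x₂')‖
        ≤ ‖(2⁻¹:ℝ)‖ * (‖x₁s - x₂s‖ + ‖x₁' - x₂'‖) := by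
          gcongr; exact norm_add_le _ _
      _ = ‖x₁s - x₂s‖ := by rw [hD']; simp [abs_of_nonneg]; ring
  have hnormsum : ‖(x₁s - x₂s) + (x₁' - x₂')‖ = 2 * ‖x₁s - x₂s‖ := by
    have h1 : ‖m₁ - m₂‖ = ‖x₁s - x₂s‖ := le_antisymm hup hlow
    have h2 : ‖m₁ - m₂‖ = ‖(2⁻¹:ℝ)‖ * ‖(x₁s - x₂s) + (x₁' - x₂')‖ := by
      rw [hmdiff, norm_smul]
    rw [h1] at h2
    rw [Real.norm_eq_abs] at h2
    rw [abs_of_nonneg (by norm_num : (0:ℝ) ≤ 2⁻¹)] at h2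
    linarith
  have huv : x₁s - x₂s = x₁' - x₂' := by
    have hpar := parallelogram_law_with_norm ℝ (x₁s - x₂s) (x₁' - x₂')
    have : ‖(x₁s - x₂s) - (x₁' - x₂')‖ ^ 2 = 0 := by
      have h2 : ‖(x₁s - x₂s) + (x₁' - x₂')‖^2 + ‖(x₁s - x₂s) - (x₁' - x₂')‖^2
          = 2 * (‖x₁s - x₂s‖^2 + ‖x₁' - x₂'‖^2) := by
        simpa [pow_two] using hpar
      rw [hnormsum, hD'] at h2; ring_nf at h2 ⊢; linarith
    have := pow_eq_zero_iff (n := 2) (by norm_num) |>.mp this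
    exact sub_eq_zero.mp (norm_eq_zero.mp this)
  -- strict positivity of the distance
  have hDpos : (0:ℝ) < ‖x₁s - x₂s‖ := by
    rcases eq_or_ne x₁s x₂s with h | h
    · exfalso
      have : x₁s ∈ ({x : EuclideanSpace ℝ (Fin d) |
          (inner ℝ (x - z₁) (Matrix.toEuclideanLin Q₁ (x - z₁)) : ℝ) ≤ 1} ∩
        {x : EuclideanSpace ℝ (Fin d) |
          (inner ℝ (x - z₂) (Matrix.toEuclideanLin Q₂ (x - z₂)) : ℝ) ≤ 1}) := by
        refine ⟨hx₁s, ?_⟩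
        show (inner ℝ (x₁s - z₂) (Matrix.toEuclideanLin Q₂ (x₁s - z₂)) : ℝ) ≤ 1
        rw [h]; exact hx₂s
      rw [hdisj] at this; exact this
    · exact norm_pos_iff.mpr (sub_ne_zero.mpr h)
  have hmD : m₁ - m₂ = x₁s - x₂s := by
    rw [hmdiff, ← huv]; module
  -- main claim : x₁s = x₁'
  have hkey : x₁s = x₁' := by
    by_contra hne
    -- midpoint strictly inside E₁
    have hdne : (x₁s - z₁) - (x₁' - z₁) ≠ 0 := by
      intro h; exact hne (by have := sub_eq_zero.mp h; simpa using this)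
    have hsne : (2⁻¹:ℝ) • ((x₁s - z₁) - (x₁' - z₁)) ≠ 0 := by
      simp [smul_eq_zero, sub_eq_zero, hne]
    have hstrict : (inner ℝ (m₁ - z₁) (T₁ (m₁ - z₁)) : ℝ) < 1 := by
      rw [hm₁z, quad_mid]
      have := quad_pos hQ₁ hsne
      rw [← hT₁] at this
      linarith
    -- perturb m₁ toward m₂
    set g : ℝ → EuclideanSpace ℝ (Fin d) := fun t => m₁ + t • (m₂ - m₁) - z₁ with hg
    have hgc : Continuous g := by
      apply Continuous.sub _ continuous_const
      exact continuous_const.add (continuous_id.smul continuous_const)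
    have hTc : Continuous T₁ := T₁.continuous_of_finiteDimensional
    have hfc : Continuous fun t : ℝ => (inner ℝ (g t) (T₁ (g t)) : ℝ) :=
      hgc.inner (hTc.comp hgc)
    have h0 : (inner ℝ (g 0) (T₁ (g 0)) : ℝ) < 1 := by
      simpa [hg] using hstrict
    have hopen : IsOpen {t : ℝ | (inner ℝ (g t) (T₁ (g t)) : ℝ) < 1} :=
      isOpen_lt hfc continuous_const
    rcases Metric.isOpen_iff.mp hopen 0 h0 with ⟨δ, hδ, hball⟩
    set t : ℝ := min (δ / 2) 2⁻¹ with ht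
    have htpos : 0 < t := lt_min (by linarith) (by norm_num)
    have htle : t ≤ 2⁻¹ := min_le_right _ _
    have htball : t ∈ Metric.ball (0:ℝ) δ := by
      rw [Metric.mem_ball, Real.dist_eq, sub_zero, abs_of_pos htpos]
      exact lt_of_le_of_lt (min_le_left _ _) (by linarith)
    have htmem : (inner ℝ (g t) (T₁ (g t)) : ℝ) < 1 := hball htball
    -- the perturbed point is feasible and strictly closer
    have hfeas : (inner ℝ ((m₁ + t • (m₂ - m₁)) - z₁)
        (T₁ ((m₁ + t • (m₂ - m₁)) - z₁)) : ℝ) ≤ 1 := le_of_lt htmem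
    have hd := hopt (m₁ + t • (m₂ - m₁)) m₂ hfeas hm₂mem
    have hpt : (m₁ + t • (m₂ - m₁)) - m₂ = (1 - t) • (m₁ - m₂) := by module
    rw [hpt, norm_smul, hmD, Real.norm_eq_abs,
      abs_of_nonneg (by linarith : (0:ℝ) ≤ 1 - t)] at hd
    nlinarith
  refine ⟨hkey, ?_⟩
  rw [hkey] at huv
  exact (sub_right_inj.mp huv)
end

section
/- (Nondegeneracy lemma for the ADMM x-step.) Let Λ ⊂ ℝ^d × ℝ^d be a bounded set. Then there exists τ* > 0 such that for every τ ≥ τ*, every λ = (λ₁, λ₂) ∈ Λ, and every y = (y₁, y₂) ∈ ℝ^d × ℝ^d with ‖y₁‖ = ‖y₂‖ = 1, the (unique) solution x* = (x₁*, x₂*) of the linear system H(τ)x* = diag(S₁, S₂)(λ + τ(y + c)) satisfies Sᵢxᵢ* − cᵢ − (1/τ)λᵢ ≠ 0 for i ∈ {1, 2}. -/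
open Matrix

set_option maxHeartbeats 1000000

lemma aux_bounds {d : ℕ} (M : Matrix (Fin d) (Fin d) ℝ) (hM : M.PosDef) :
    ∃ N m : ℝ, 0 < N ∧ 0 < m ∧
      (∀ v : EuclideanSpace ℝ (Fin d), ‖toEuclideanLin M v‖ ≤ N * ‖v‖) ∧
      ∀ v : EuclideanSpace ℝ (Fin d), m * ‖v‖ ≤ ‖toEuclideanLin M v‖ := by
  have hinj : Function.Injective (toEuclideanLin M) := by
    intro u v huv
    have := congrArg (WithLp.equiv 2 (Fin d → ℝ)) huv
    change M *ᵥ (WithLp.equiv 2 (Fin d → ℝ) u) = M *ᵥ (WithLp.equiv 2 (Fin d → ℝ) v) at this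
    have h2 : (WithLp.equiv 2 (Fin d → ℝ)) u = (WithLp.equiv 2 (Fin d → ℝ)) v :=
      Matrix.mulVec_injective_iff_isUnit.mpr hM.isUnit this
    exact (WithLp.equiv 2 (Fin d → ℝ)).injective h2
  let e : EuclideanSpace ℝ (Fin d) ≃L[ℝ] EuclideanSpace ℝ (Fin d) :=
    (LinearEquiv.ofInjectiveEndo (toEuclideanLin M) hinj).toContinuousLinearEquiv
  have he : ∀ v, e v = toEuclideanLin M v := fun v => rfl
  obtain ⟨K, hK⟩ : ∃ K : NNReal, AntilipschitzWith K e := ⟨_, e.antilipschitz⟩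
  refine ⟨‖(e : EuclideanSpace ℝ (Fin d) →L[ℝ] EuclideanSpace ℝ (Fin d))‖ + 1, ((K : ℝ) + 1)⁻¹,
    ?_, ?_, ?_, ?_⟩
  · positivity
  · positivity
  · intro v
    have h1 : ‖(e : EuclideanSpace ℝ (Fin d) →L[ℝ] EuclideanSpace ℝ (Fin d)) v‖ ≤
        ‖(e : EuclideanSpace ℝ (Fin d) →L[ℝ] EuclideanSpace ℝ (Fin d))‖ * ‖v‖ :=
      ContinuousLinearMap.le_opNorm _ v
    have h2 : (e : EuclideanSpace ℝ (Fin d) →L[ℝ] EuclideanSpace ℝ (Fin d)) v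
        = toEuclideanLin M v := he v
    rw [h2] at h1
    nlinarith [norm_nonneg v]
  · intro v
    have h1 : ‖v‖ ≤ (K : ℝ) * ‖e v‖ := by
      simpa using hK.le_mul_dist v 0
    rw [he] at h1
    rw [inv_mul_le_iff₀ (by positivity)]
    nlinarith [norm_nonneg (toEuclideanLin M v), K.coe_nonneg]

lemma aux_mul {d : ℕ} (A B : Matrix (Fin d) (Fin d) ℝ) (v : EuclideanSpace ℝ (Fin d)) :
    toEuclideanLin (A * B) v = toEuclideanLin A (toEuclideanLin B v) := by
  simp [toEuclideanLin_apply, Matrix.mulVec_mulVec]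

/-- nondegeneracy lemma for the ADMM x-step: for any bounded set `Λ` of
multipliers there exists `τ* > 0` such that for all `τ ≥ τ*`, all `λ ∈ Λ`, and all unit
vectors `y₁, y₂`, any solution `x*` of `H(τ)x* = diag(S₁,S₂)(λ + τ(y + c))` satisfies
`Sᵢxᵢ* − cᵢ − (1/τ)λᵢ ≠ 0` for `i ∈ {1,2}`. -/
theorem stmt_14 (d : ℕ)
    (Q₁ Q₂ S₁ S₂ : Matrix (Fin d) (Fin d) ℝ)
    (hQ₁ : Q₁.PosDef) (hQ₂ : Q₂.PosDef) (hS₁ : S₁.PosDef) (hS₂ : S₂.PosDef)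
    (hS₁Q : S₁ * S₁ = Q₁) (hS₂Q : S₂ * S₂ = Q₂)
    (z₁ z₂ c₁ c₂ : EuclideanSpace ℝ (Fin d))
    (hc₁ : c₁ = Matrix.toEuclideanLin S₁ z₁) (hc₂ : c₂ = Matrix.toEuclideanLin S₂ z₂)
    (Λ : Set (EuclideanSpace ℝ (Fin d) × EuclideanSpace ℝ (Fin d)))
    (hΛ : Bornology.IsBounded Λ) :
    ∃ τs : ℝ, 0 < τs ∧
      ∀ τ : ℝ, τs ≤ τ →
        ∀ l ∈ Λ, ∀ y₁ y₂ : EuclideanSpace ℝ (Fin d), ‖y₁‖ = 1 → ‖y₂‖ = 1 →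
          ∀ x₁ x₂ : EuclideanSpace ℝ (Fin d),
            (x₁ + τ • Matrix.toEuclideanLin Q₁ x₁ - x₂
                = Matrix.toEuclideanLin S₁ (l.1 + τ • (y₁ + c₁))
              ∧ -x₁ + (x₂ + τ • Matrix.toEuclideanLin Q₂ x₂)
                = Matrix.toEuclideanLin S₂ (l.2 + τ • (y₂ + c₂))) →
            Matrix.toEuclideanLin S₁ x₁ - c₁ - (1 / τ) • l.1 ≠ 0 ∧
            Matrix.toEuclideanLin S₂ x₂ - c₂ - (1 / τ) • l.2 ≠ 0 := by
  obtain ⟨NS₁, mS₁, hNS₁, hmS₁, hNS₁le, hmS₁le⟩ := aux_bounds S₁ hS₁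
  obtain ⟨NS₂, mS₂, hNS₂, hmS₂, hNS₂le, hmS₂le⟩ := aux_bounds S₂ hS₂
  obtain ⟨NQ₁, mQ₁, hNQ₁, hmQ₁, hNQ₁le, hmQ₁le⟩ := aux_bounds Q₁ hQ₁
  obtain ⟨NQ₂, mQ₂, hNQ₂, hmQ₂, hNQ₂le, hmQ₂le⟩ := aux_bounds Q₂ hQ₂
  obtain ⟨R, hR⟩ := hΛ.exists_norm_le
  have hRbd : ∀ l ∈ Λ, ‖l.1‖ ≤ |R| ∧ ‖l.2‖ ≤ |R| := by
    intro l hl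
    exact ⟨le_trans (norm_fst_le l) (le_trans (hR l hl) (le_abs_self R)),
      le_trans (norm_snd_le l) (le_trans (hR l hl) (le_abs_self R))⟩
  have hP0 : 0 ≤ NS₁ * (‖c₁‖ + |R|) / mQ₁ + (NS₁ + NS₂ * (|R| + 1 + ‖c₂‖)) / mQ₂ := by positivity
  have hP'0 : 0 ≤ NS₂ * (‖c₂‖ + |R|) / mQ₂ + (NS₂ + NS₁ * (|R| + 1 + ‖c₁‖)) / mQ₁ := by positivity
  have hmin : 0 < min mS₁ mS₂ := lt_min hmS₁ hmS₂
  refine ⟨max 1 ((NS₁ * (‖c₁‖ + |R|) / mQ₁ + (NS₁ + NS₂ * (|R| + 1 + ‖c₂‖)) / mQ₂ + (NS₂ * (‖c₂‖ + |R|) / mQ₂ + (NS₂ + NS₁ * (|R| + 1 + ‖c₁‖)) / mQ₁) + 1) / min mS₁ mS₂), lt_of_lt_of_le one_pos (le_max_left _ _), ?_⟩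
  intro τ hτ l hl y₁ y₂ hy₁ hy₂ x₁ x₂ ⟨heq1, heq2⟩
  have hτ1 : (1 : ℝ) ≤ τ := le_trans (le_max_left _ _) hτ
  have hτ0 : (0 : ℝ) < τ := lt_of_lt_of_le one_pos hτ1
  have hτne : τ ≠ 0 := hτ0.ne'
  have hτmin : NS₁ * (‖c₁‖ + |R|) / mQ₁ + (NS₁ + NS₂ * (|R| + 1 + ‖c₂‖)) / mQ₂ + (NS₂ * (‖c₂‖ + |R|) / mQ₂ + (NS₂ + NS₁ * (|R| + 1 + ‖c₁‖)) / mQ₁) + 1 ≤ τ * min mS₁ mS₂ := by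
    have h := le_trans (le_max_right 1 ((NS₁ * (‖c₁‖ + |R|) / mQ₁ + (NS₁ + NS₂ * (|R| + 1 + ‖c₂‖)) / mQ₂ + (NS₂ * (‖c₂‖ + |R|) / mQ₂ + (NS₂ + NS₁ * (|R| + 1 + ‖c₁‖)) / mQ₁) + 1) / min mS₁ mS₂)) hτ
    rw [div_le_iff₀ hmin] at h
    linarith
  have hQ1c : ∀ v, toEuclideanLin Q₁ v = toEuclideanLin S₁ (toEuclideanLin S₁ v) := by
    intro v; rw [← hS₁Q]; exact aux_mul S₁ S₁ v
  have hQ2c : ∀ v, toEuclideanLin Q₂ v = toEuclideanLin S₂ (toEuclideanLin S₂ v) := by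
    intro v; rw [← hS₂Q]; exact aux_mul S₂ S₂ v
  have hl₁ : ‖(toEuclideanLin S₁) l.1‖ ≤ NS₁ * |R| :=
    le_trans (hNS₁le l.1) (mul_le_mul_of_nonneg_left (hRbd l hl).1 hNS₁.le)
  have hl₂ : ‖(toEuclideanLin S₂) l.2‖ ≤ NS₂ * |R| :=
    le_trans (hNS₂le l.2) (mul_le_mul_of_nonneg_left (hRbd l hl).2 hNS₂.le)
  have hay₁ : ‖(toEuclideanLin S₁) y₁‖ ≤ NS₁ := by
    have := hNS₁le y₁; rwa [hy₁, mul_one] at this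
  have hby₂ : ‖(toEuclideanLin S₂) y₂‖ ≤ NS₂ := by
    have := hNS₂le y₂; rwa [hy₂, mul_one] at this
  have hay₁' : mS₁ ≤ ‖(toEuclideanLin S₁) y₁‖ := by
    have := hmS₁le y₁; rwa [hy₁, mul_one] at this
  have hby₂' : mS₂ ≤ ‖(toEuclideanLin S₂) y₂‖ := by
    have := hmS₂le y₂; rwa [hy₂, mul_one] at this
  have hac₁ : ‖(toEuclideanLin S₁) c₁‖ ≤ NS₁ * ‖c₁‖ := hNS₁le c₁
  have hbc₂ : ‖(toEuclideanLin S₂) c₂‖ ≤ NS₂ * ‖c₂‖ := hNS₂le c₂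
  have heq1' : x₁ + τ • toEuclideanLin Q₁ x₁ - x₂
      = toEuclideanLin S₁ l.1 + (τ • toEuclideanLin S₁ y₁ + τ • toEuclideanLin S₁ c₁) := by
    rw [heq1, map_add, _root_.map_smul, map_add, smul_add]
  have heq2' : -x₁ + (x₂ + τ • toEuclideanLin Q₂ x₂)
      = toEuclideanLin S₂ l.2 + (τ • toEuclideanLin S₂ y₂ + τ • toEuclideanLin S₂ c₂) := by
    rw [heq2, map_add, _root_.map_smul, map_add, smul_add]
  constructor
  · -- case i = 1
    intro h0
    have h1 : τ • toEuclideanLin S₁ x₁ = τ • c₁ + l.1 := by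
      have h0' : toEuclideanLin S₁ x₁ = c₁ + (1 / τ) • l.1 := by
        have := h0; rw [sub_sub, sub_eq_zero] at this; exact this
      rw [h0', smul_add, smul_smul, mul_one_div_cancel hτne, one_smul]
    have hq1 : τ • toEuclideanLin Q₁ x₁ = τ • toEuclideanLin S₁ c₁ + toEuclideanLin S₁ l.1 := by
      calc τ • toEuclideanLin Q₁ x₁ = toEuclideanLin S₁ (τ • toEuclideanLin S₁ x₁) := by
            rw [hQ1c, _root_.map_smul]
        _ = toEuclideanLin S₁ (τ • c₁ + l.1) := by rw [h1]
        _ = τ • toEuclideanLin S₁ c₁ + toEuclideanLin S₁ l.1 := by rw [map_add, _root_.map_smul]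
    have hx12 : x₁ - x₂ = τ • toEuclideanLin S₁ y₁ := by
      linear_combination (norm := module) heq1' - hq1
    have hq2 : τ • toEuclideanLin Q₂ x₂ = τ • toEuclideanLin S₁ y₁ + toEuclideanLin S₂ l.2
        + τ • toEuclideanLin S₂ y₂ + τ • toEuclideanLin S₂ c₂ := by
      linear_combination (norm := module) heq2' + hx12
    -- bound on ‖x₁‖
    have hx₁bd : ‖x₁‖ ≤ NS₁ * (‖c₁‖ + |R|) / mQ₁ := by
      rw [le_div_iff₀ hmQ₁]
      have t1 : τ * (mQ₁ * ‖x₁‖) ≤ ‖τ • toEuclideanLin Q₁ x₁‖ := by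
        rw [norm_smul, Real.norm_eq_abs, abs_of_pos hτ0]
        exact mul_le_mul_of_nonneg_left (hmQ₁le x₁) hτ0.le
      have t2 : ‖τ • toEuclideanLin Q₁ x₁‖ ≤ τ * ‖toEuclideanLin S₁ c₁‖
          + ‖toEuclideanLin S₁ l.1‖ := by
        rw [hq1]
        refine le_trans (norm_add_le _ _) ?_
        rw [norm_smul, Real.norm_eq_abs, abs_of_pos hτ0]
      have key : τ * (mQ₁ * ‖x₁‖) ≤ τ * (NS₁ * (‖c₁‖ + |R|)) := by
        have m1 : τ * ‖toEuclideanLin S₁ c₁‖ ≤ τ * (NS₁ * ‖c₁‖) :=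
          mul_le_mul_of_nonneg_left hac₁ hτ0.le
        have m2 : ‖toEuclideanLin S₁ l.1‖ ≤ τ * (NS₁ * |R|) :=
          le_trans hl₁ (le_mul_of_one_le_left (by positivity) hτ1)
        have m3 : τ * (NS₁ * (‖c₁‖ + |R|)) = τ * (NS₁ * ‖c₁‖) + τ * (NS₁ * |R|) := by ring
        linarith
      have := le_of_mul_le_mul_left key hτ0
      linarith
    -- bound on ‖x₂‖
    have hx₂bd : ‖x₂‖ ≤ (NS₁ + NS₂ * (|R| + 1 + ‖c₂‖)) / mQ₂ := by
      rw [le_div_iff₀ hmQ₂]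
      have t1 : τ * (mQ₂ * ‖x₂‖) ≤ ‖τ • toEuclideanLin Q₂ x₂‖ := by
        rw [norm_smul, Real.norm_eq_abs, abs_of_pos hτ0]
        exact mul_le_mul_of_nonneg_left (hmQ₂le x₂) hτ0.le
      have t2 : ‖τ • toEuclideanLin Q₂ x₂‖ ≤ τ * ‖toEuclideanLin S₁ y₁‖
          + ‖toEuclideanLin S₂ l.2‖ + τ * ‖toEuclideanLin S₂ y₂‖
          + τ * ‖toEuclideanLin S₂ c₂‖ := by
        rw [hq2]
        refine le_trans (norm_add_le _ _) ?_
        have u1 := norm_add_le (τ • toEuclideanLin S₁ y₁ + toEuclideanLin S₂ l.2)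
          (τ • toEuclideanLin S₂ y₂)
        have u2 := norm_add_le (τ • toEuclideanLin S₁ y₁) (toEuclideanLin S₂ l.2)
        simp only [norm_smul, Real.norm_eq_abs, abs_of_pos hτ0] at u1 u2 ⊢
        linarith
      have key : τ * (mQ₂ * ‖x₂‖) ≤ τ * (NS₁ + NS₂ * (|R| + 1 + ‖c₂‖)) := by
        have m1 : τ * ‖toEuclideanLin S₁ y₁‖ ≤ τ * NS₁ :=
          mul_le_mul_of_nonneg_left hay₁ hτ0.le
        have m2 : ‖toEuclideanLin S₂ l.2‖ ≤ τ * (NS₂ * |R|) :=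
          le_trans hl₂ (le_mul_of_one_le_left (by positivity) hτ1)
        have m3 : τ * ‖toEuclideanLin S₂ y₂‖ ≤ τ * NS₂ :=
          mul_le_mul_of_nonneg_left hby₂ hτ0.le
        have m4 : τ * ‖toEuclideanLin S₂ c₂‖ ≤ τ * (NS₂ * ‖c₂‖) :=
          mul_le_mul_of_nonneg_left hbc₂ hτ0.le
        have m5 : τ * (NS₁ + NS₂ * (|R| + 1 + ‖c₂‖))
            = τ * NS₁ + τ * (NS₂ * |R|) + τ * NS₂ + τ * (NS₂ * ‖c₂‖) := by ring
        linarith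
      have := le_of_mul_le_mul_left key hτ0
      linarith
    -- contradiction
    have hlow : τ * mS₁ ≤ ‖x₁ - x₂‖ := by
      rw [hx12, norm_smul, Real.norm_eq_abs, abs_of_pos hτ0]
      exact mul_le_mul_of_nonneg_left hay₁' hτ0.le
    have hup : ‖x₁ - x₂‖ ≤ ‖x₁‖ + ‖x₂‖ := norm_sub_le _ _
    have hms : τ * min mS₁ mS₂ ≤ τ * mS₁ :=
      mul_le_mul_of_nonneg_left (min_le_left _ _) hτ0.le
    linarith
  · -- case i = 2
    intro h0
    have h1 : τ • toEuclideanLin S₂ x₂ = τ • c₂ + l.2 := by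
      have h0' : toEuclideanLin S₂ x₂ = c₂ + (1 / τ) • l.2 := by
        have := h0; rw [sub_sub, sub_eq_zero] at this; exact this
      rw [h0', smul_add, smul_smul, mul_one_div_cancel hτne, one_smul]
    have hq2 : τ • toEuclideanLin Q₂ x₂ = τ • toEuclideanLin S₂ c₂ + toEuclideanLin S₂ l.2 := by
      calc τ • toEuclideanLin Q₂ x₂ = toEuclideanLin S₂ (τ • toEuclideanLin S₂ x₂) := by
            rw [hQ2c, _root_.map_smul]
        _ = toEuclideanLin S₂ (τ • c₂ + l.2) := by rw [h1]
        _ = τ • toEuclideanLin S₂ c₂ + toEuclideanLin S₂ l.2 := by rw [map_add, _root_.map_smul]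
    have hx21 : x₂ - x₁ = τ • toEuclideanLin S₂ y₂ := by
      linear_combination (norm := module) heq2' - hq2
    have hq1 : τ • toEuclideanLin Q₁ x₁ = τ • toEuclideanLin S₂ y₂ + toEuclideanLin S₁ l.1
        + τ • toEuclideanLin S₁ y₁ + τ • toEuclideanLin S₁ c₁ := by
      linear_combination (norm := module) heq1' + hx21
    -- bound on ‖x₂‖
    have hx₂bd : ‖x₂‖ ≤ NS₂ * (‖c₂‖ + |R|) / mQ₂ := by
      rw [le_div_iff₀ hmQ₂]
      have t1 : τ * (mQ₂ * ‖x₂‖) ≤ ‖τ • toEuclideanLin Q₂ x₂‖ := by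
        rw [norm_smul, Real.norm_eq_abs, abs_of_pos hτ0]
        exact mul_le_mul_of_nonneg_left (hmQ₂le x₂) hτ0.le
      have t2 : ‖τ • toEuclideanLin Q₂ x₂‖ ≤ τ * ‖toEuclideanLin S₂ c₂‖
          + ‖toEuclideanLin S₂ l.2‖ := by
        rw [hq2]
        refine le_trans (norm_add_le _ _) ?_
        rw [norm_smul, Real.norm_eq_abs, abs_of_pos hτ0]
      have key : τ * (mQ₂ * ‖x₂‖) ≤ τ * (NS₂ * (‖c₂‖ + |R|)) := by
        have m1 : τ * ‖toEuclideanLin S₂ c₂‖ ≤ τ * (NS₂ * ‖c₂‖) :=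
          mul_le_mul_of_nonneg_left hbc₂ hτ0.le
        have m2 : ‖toEuclideanLin S₂ l.2‖ ≤ τ * (NS₂ * |R|) :=
          le_trans hl₂ (le_mul_of_one_le_left (by positivity) hτ1)
        have m3 : τ * (NS₂ * (‖c₂‖ + |R|)) = τ * (NS₂ * ‖c₂‖) + τ * (NS₂ * |R|) := by ring
        linarith
      have := le_of_mul_le_mul_left key hτ0
      linarith
    -- bound on ‖x₁‖
    have hx₁bd : ‖x₁‖ ≤ (NS₂ + NS₁ * (|R| + 1 + ‖c₁‖)) / mQ₁ := by
      rw [le_div_iff₀ hmQ₁]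
      have t1 : τ * (mQ₁ * ‖x₁‖) ≤ ‖τ • toEuclideanLin Q₁ x₁‖ := by
        rw [norm_smul, Real.norm_eq_abs, abs_of_pos hτ0]
        exact mul_le_mul_of_nonneg_left (hmQ₁le x₁) hτ0.le
      have t2 : ‖τ • toEuclideanLin Q₁ x₁‖ ≤ τ * ‖toEuclideanLin S₂ y₂‖
          + ‖toEuclideanLin S₁ l.1‖ + τ * ‖toEuclideanLin S₁ y₁‖
          + τ * ‖toEuclideanLin S₁ c₁‖ := by
        rw [hq1]
        refine le_trans (norm_add_le _ _) ?_
        have u1 := norm_add_le (τ • toEuclideanLin S₂ y₂ + toEuclideanLin S₁ l.1)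
          (τ • toEuclideanLin S₁ y₁)
        have u2 := norm_add_le (τ • toEuclideanLin S₂ y₂) (toEuclideanLin S₁ l.1)
        simp only [norm_smul, Real.norm_eq_abs, abs_of_pos hτ0] at u1 u2 ⊢
        linarith
      have key : τ * (mQ₁ * ‖x₁‖) ≤ τ * (NS₂ + NS₁ * (|R| + 1 + ‖c₁‖)) := by
        have m1 : τ * ‖toEuclideanLin S₂ y₂‖ ≤ τ * NS₂ :=
          mul_le_mul_of_nonneg_left hby₂ hτ0.le
        have m2 : ‖toEuclideanLin S₁ l.1‖ ≤ τ * (NS₁ * |R|) :=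
          le_trans hl₁ (le_mul_of_one_le_left (by positivity) hτ1)
        have m3 : τ * ‖toEuclideanLin S₁ y₁‖ ≤ τ * NS₁ :=
          mul_le_mul_of_nonneg_left hay₁ hτ0.le
        have m4 : τ * ‖toEuclideanLin S₁ c₁‖ ≤ τ * (NS₁ * ‖c₁‖) :=
          mul_le_mul_of_nonneg_left hac₁ hτ0.le
        have m5 : τ * (NS₂ + NS₁ * (|R| + 1 + ‖c₁‖))
            = τ * NS₂ + τ * (NS₁ * |R|) + τ * NS₁ + τ * (NS₁ * ‖c₁‖) := by ring
        linarith
      have := le_of_mul_le_mul_left key hτ0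
      linarith
    -- contradiction
    have hlow : τ * mS₂ ≤ ‖x₂ - x₁‖ := by
      rw [hx21, norm_smul, Real.norm_eq_abs, abs_of_pos hτ0]
      exact mul_le_mul_of_nonneg_left hby₂' hτ0.le
    have hup : ‖x₂ - x₁‖ ≤ ‖x₂‖ + ‖x₁‖ := norm_sub_le _ _
    have hms : τ * min mS₁ mS₂ ≤ τ * mS₂ :=
      mul_le_mul_of_nonneg_left (min_le_right _ _) hτ0.le
    linarith
end

section
/- (Proposition on the nonconvex ADMM with unbounded penalty.) Let τₙ > 0 be a nondecreasing sequence with τₙ → +∞, and let sequences xⁿ, yⁿ, λⁿ in ℝ^d × ℝ^d satisfy for all n: x^{n+1} is the unique solution of H(τₙ)x^{n+1} = diag(S₁, S₂)(λⁿ + τₙ(yⁿ + c)); ‖yᵢ^{n+1}‖ = 1 and yᵢ^{n+1} = vᵢⁿ/‖vᵢⁿ‖ whenever vᵢⁿ := Sᵢxᵢ^{n+1} − cᵢ − (1/τₙ)λᵢⁿ ≠ 0; and λᵢ^{n+1} = λᵢⁿ − τₙ(Sᵢxᵢ^{n+1} − yᵢ^{n+1} − cᵢ), for i ∈ {1,2}.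 Suppose the sequence (λⁿ) is bounded. Then: (a) the sequence (xⁿ, yⁿ) is bounded and every limit point (x*, y*) of (xⁿ, yⁿ) is feasible, i.e. Sᵢxᵢ* − yᵢ* = cᵢ and ‖yᵢ*‖ = 1 for i ∈ {1,2}; (b) every limit point (x*, y*, λ*) of the sequence (xⁿ, yⁿ, λⁿ) satisfies the KKT conditions — x₁* − x₂* − S₁λ₁* = 0, x₂* − x₁* − S₂λ₂* = 0, and for each i there exists μᵢ* ∈ ℝ with λᵢ* + μᵢ*yᵢ* = 0, Sᵢxᵢ* − yᵢ* = cᵢ, ‖yᵢ*‖ = 1 — if and only if τₙ‖y^{n+1} − yⁿ‖ → 0 as n → ∞. -/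
open Matrix Filter


section Aux

lemma eLin_mul {d : ℕ} (A B : Matrix (Fin d) (Fin d) ℝ) (v : EuclideanSpace ℝ (Fin d)) :
    Matrix.toEuclideanLin (A * B) v = Matrix.toEuclideanLin A (Matrix.toEuclideanLin B v) := by
  simp [Matrix.toEuclideanLin_eq_toLin,
    Matrix.toLin_mul _ (PiLp.basisFun 2 ℝ (Fin d)) _]

lemma eLin_one {d : ℕ} (v : EuclideanSpace ℝ (Fin d)) :
    Matrix.toEuclideanLin (1 : Matrix (Fin d) (Fin d) ℝ) v = v := by
  simp [Matrix.toEuclideanLin_eq_toLin]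

lemma exists_inv {d : ℕ} (S : Matrix (Fin d) (Fin d) ℝ) (hS : S.PosDef) :
    ∃ g : EuclideanSpace ℝ (Fin d) →L[ℝ] EuclideanSpace ℝ (Fin d),
      ∀ v, g (Matrix.toEuclideanLin S v) = v := by
  obtain ⟨u, hu⟩ := hS.isUnit
  refine ⟨LinearMap.toContinuousLinearMap (Matrix.toEuclideanLin (↑u⁻¹ : Matrix _ _ ℝ)),
    fun v => ?_⟩
  have : Matrix.toEuclideanLin ((↑u⁻¹ : Matrix _ _ ℝ) * S) v = v := by
    rw [← hu, u.inv_mul, eLin_one]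
  simpa [eLin_mul] using this

lemma key1 {d : ℕ} (Q S : Matrix (Fin d) (Fin d) ℝ) (hSQ : S * S = Q) (τn : ℝ)
    (x1 x2 yo yn lo ln c : EuclideanSpace ℝ (Fin d))
    (hx : x1 + τn • Matrix.toEuclideanLin Q x1 - x2 = Matrix.toEuclideanLin S (lo + τn • (yo + c)))
    (hln : ln = lo - τn • (Matrix.toEuclideanLin S x1 - yn - c)) :
    x1 - x2 - Matrix.toEuclideanLin S ln = Matrix.toEuclideanLin S (τn • (yo - yn)) := by
  have hQ : Matrix.toEuclideanLin Q x1 = Matrix.toEuclideanLin S (Matrix.toEuclideanLin S x1) := by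
    rw [← hSQ, eLin_mul]
  have h2 := congrArg (Matrix.toEuclideanLin S) hln
  simp only [map_add, _root_.map_smul, map_sub] at hx h2 ⊢
  rw [hQ] at hx
  linear_combination (norm := module) hx - h2

lemma collin {d : ℕ} (S : Matrix (Fin d) (Fin d) ℝ) (τn : ℝ) (hτ : 0 < τn)
    (x1 y' lo ln c : EuclideanSpace ℝ (Fin d))
    (hy1 : ‖y'‖ = 1)
    (hyv : Matrix.toEuclideanLin S x1 - c - (1 / τn) • lo ≠ 0 →
      y' = ‖Matrix.toEuclideanLin S x1 - c - (1 / τn) • lo‖⁻¹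
            • (Matrix.toEuclideanLin S x1 - c - (1 / τn) • lo))
    (hln : ln = lo - τn • (Matrix.toEuclideanLin S x1 - y' - c)) :
    ln = (inner ℝ y' ln : ℝ) • y' := by
  obtain ⟨μ, hμ⟩ : ∃ μ : ℝ, ln = μ • y' := by
    set v := Matrix.toEuclideanLin S x1 - c - (1 / τn) • lo with hv
    have hsm : τn • ((1 / τn) • lo) = lo := by
      rw [smul_smul, mul_one_div, div_self hτ.ne', one_smul]
    have hTx : Matrix.toEuclideanLin S x1 - y' - c = v + (1 / τn) • lo - y' := by
      rw [hv]; module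
    have hln2 : ln = τn • y' - τn • v := by
      rw [hln, hTx]; linear_combination (norm := module) -hsm
    by_cases h0 : v = 0
    · exact ⟨τn, by rw [hln2, h0, smul_zero, sub_zero]⟩
    · have hv' : v = ‖v‖ • y' := by
        rw [hyv h0, smul_smul, mul_inv_cancel₀ (norm_ne_zero_iff.mpr h0), one_smul]
      refine ⟨τn - τn * ‖v‖, ?_⟩
      rw [hln2]; conv_lhs => rw [hv']
      rw [smul_smul, sub_smul]
  rw [hμ, real_inner_smul_right, real_inner_self_eq_norm_mul_norm, hy1]
  ring_nf

lemma exists_strictMono_comp {f : ℕ → ℕ} (hf : Tendsto f atTop atTop) :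
    ∃ g : ℕ → ℕ, StrictMono g ∧ StrictMono (f ∘ g) := by
  have h : ∀ m k : ℕ, ∃ n, m < n ∧ k < f n := by
    intro m k
    obtain ⟨n, hn1, hn2⟩ :=
      ((hf.eventually (eventually_gt_atTop k)).and (eventually_gt_atTop m)).exists
    exact ⟨n, hn2, hn1⟩
  choose F hF1 hF2 using h
  let g : ℕ → ℕ := fun k => Nat.rec 0 (fun _ gk => F gk (f gk)) k
  have hg : ∀ k, g (k + 1) = F (g k) (f (g k)) := fun _ => rfl
  refine ⟨g, strictMono_nat_of_lt_succ fun k => ?_, strictMono_nat_of_lt_succ fun k => ?_⟩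
  · rw [hg]; exact hF1 _ _
  · simp only [Function.comp]; rw [hg]; exact hF2 _ _

lemma sqrt_sq_add_sq_le {a b : ℝ} (ha : 0 ≤ a) (hb : 0 ≤ b) :
    Real.sqrt (a ^ 2 + b ^ 2) ≤ a + b := by
  calc Real.sqrt (a ^ 2 + b ^ 2) ≤ Real.sqrt ((a + b) ^ 2) :=
        Real.sqrt_le_sqrt (by nlinarith)
    _ = a + b := Real.sqrt_sq (by positivity)

lemma le_sqrt_sq_add_sq_left (a b : ℝ) (ha : 0 ≤ a) :
    a ≤ Real.sqrt (a ^ 2 + b ^ 2) := by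
  calc a = Real.sqrt (a ^ 2) := (Real.sqrt_sq ha).symm
    _ ≤ _ := Real.sqrt_le_sqrt (le_add_of_nonneg_right (sq_nonneg _))

lemma le_sqrt_sq_add_sq_right (a b : ℝ) (hb : 0 ≤ b) :
    b ≤ Real.sqrt (a ^ 2 + b ^ 2) := by
  calc b = Real.sqrt (b ^ 2) := (Real.sqrt_sq hb).symm
    _ ≤ _ := Real.sqrt_le_sqrt (le_add_of_nonneg_left (sq_nonneg _))

end Aux

set_option maxHeartbeats 1000000 in
/-- proposition on the nonconvex ADMM with unbounded penalty: if the
penalty parameters increase unboundedly and the multipliers remain bounded, then the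
sequence `(xⁿ, yⁿ)` is bounded, all its limit points are feasible, and all limit points
of `(xⁿ, yⁿ, λⁿ)` satisfy the KKT conditions iff `τₙ‖y^{n+1} − yⁿ‖ → 0`. -/
theorem stmt_17 (d : ℕ)
    (Q₁ Q₂ S₁ S₂ : Matrix (Fin d) (Fin d) ℝ)
    (hQ₁ : Q₁.PosDef) (hQ₂ : Q₂.PosDef) (hS₁ : S₁.PosDef) (hS₂ : S₂.PosDef)
    (hS₁Q : S₁ * S₁ = Q₁) (hS₂Q : S₂ * S₂ = Q₂)
    (z₁ z₂ c₁ c₂ : EuclideanSpace ℝ (Fin d))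
    (hc₁ : c₁ = Matrix.toEuclideanLin S₁ z₁) (hc₂ : c₂ = Matrix.toEuclideanLin S₂ z₂)
    (τ : ℕ → ℝ) (hτpos : ∀ n, 0 < τ n) (hτmono : Monotone τ)
    (hτtop : Tendsto τ atTop atTop)
    (x y l : ℕ → EuclideanSpace ℝ (Fin d) × EuclideanSpace ℝ (Fin d))
    -- x-update: x^{n+1} solves H(τₙ) x^{n+1} = diag(S₁,S₂)(λⁿ + τₙ(yⁿ + c))
    (hx : ∀ n : ℕ,
      (x (n + 1)).1 + τ n • Matrix.toEuclideanLin Q₁ (x (n + 1)).1 - (x (n + 1)).2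
          = Matrix.toEuclideanLin S₁ ((l n).1 + τ n • ((y n).1 + c₁)) ∧
      -(x (n + 1)).1 + ((x (n + 1)).2 + τ n • Matrix.toEuclideanLin Q₂ (x (n + 1)).2)
          = Matrix.toEuclideanLin S₂ ((l n).2 + τ n • ((y n).2 + c₂)))
    -- y-update
    (hy : ∀ n : ℕ,
      (‖(y (n + 1)).1‖ = 1 ∧
        (Matrix.toEuclideanLin S₁ (x (n + 1)).1 - c₁ - (1 / τ n) • (l n).1 ≠ 0 →
          (y (n + 1)).1
            = ‖Matrix.toEuclideanLin S₁ (x (n + 1)).1 - c₁ - (1 / τ n) • (l n).1‖⁻¹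
                • (Matrix.toEuclideanLin S₁ (x (n + 1)).1 - c₁ - (1 / τ n) • (l n).1))) ∧
      (‖(y (n + 1)).2‖ = 1 ∧
        (Matrix.toEuclideanLin S₂ (x (n + 1)).2 - c₂ - (1 / τ n) • (l n).2 ≠ 0 →
          (y (n + 1)).2
            = ‖Matrix.toEuclideanLin S₂ (x (n + 1)).2 - c₂ - (1 / τ n) • (l n).2‖⁻¹
                • (Matrix.toEuclideanLin S₂ (x (n + 1)).2 - c₂ - (1 / τ n) • (l n).2))))
    -- multiplier update
    (hl : ∀ n : ℕ,
      (l (n + 1)).1 = (l n).1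
          - τ n • (Matrix.toEuclideanLin S₁ (x (n + 1)).1 - (y (n + 1)).1 - c₁) ∧
      (l (n + 1)).2 = (l n).2
          - τ n • (Matrix.toEuclideanLin S₂ (x (n + 1)).2 - (y (n + 1)).2 - c₂))
    -- boundedness of the multipliers
    (hlbdd : ∃ C : ℝ, ∀ n : ℕ, ‖(l n).1‖ ≤ C ∧ ‖(l n).2‖ ≤ C) :
    -- (a) boundedness of (xⁿ, yⁿ) and feasibility of its limit points
    ((∃ C : ℝ, ∀ n : ℕ,
        ‖(x n).1‖ ≤ C ∧ ‖(x n).2‖ ≤ C ∧ ‖(y n).1‖ ≤ C ∧ ‖(y n).2‖ ≤ C) ∧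
      (∀ (xs ys : EuclideanSpace ℝ (Fin d) × EuclideanSpace ℝ (Fin d)) (φ : ℕ → ℕ),
        StrictMono φ →
        Tendsto (fun k => (x (φ k), y (φ k))) atTop (nhds (xs, ys)) →
        (Matrix.toEuclideanLin S₁ xs.1 - ys.1 = c₁ ∧
          Matrix.toEuclideanLin S₂ xs.2 - ys.2 = c₂ ∧
          ‖ys.1‖ = 1 ∧ ‖ys.2‖ = 1))) ∧
    -- (b) limit points are KKT points iff τₙ‖y^{n+1} − yⁿ‖ → 0
    ((∀ (xs ys ls : EuclideanSpace ℝ (Fin d) × EuclideanSpace ℝ (Fin d)) (φ : ℕ → ℕ),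
        StrictMono φ →
        Tendsto (fun k => (x (φ k), y (φ k), l (φ k))) atTop (nhds (xs, ys, ls)) →
        (xs.1 - xs.2 - Matrix.toEuclideanLin S₁ ls.1 = 0 ∧
          xs.2 - xs.1 - Matrix.toEuclideanLin S₂ ls.2 = 0 ∧
          (∃ μ₁ : ℝ, ls.1 + μ₁ • ys.1 = 0) ∧ (∃ μ₂ : ℝ, ls.2 + μ₂ • ys.2 = 0) ∧
          Matrix.toEuclideanLin S₁ xs.1 - ys.1 = c₁ ∧
          Matrix.toEuclideanLin S₂ xs.2 - ys.2 = c₂ ∧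
          ‖ys.1‖ = 1 ∧ ‖ys.2‖ = 1))
      ↔ Tendsto (fun n =>
          τ n * Real.sqrt (‖(y (n + 1)).1 - (y n).1‖ ^ 2 + ‖(y (n + 1)).2 - (y n).2‖ ^ 2))
          atTop (nhds 0)) := by
  classical
  obtain ⟨C₀', hC₀'⟩ := hlbdd
  set C₀ : ℝ := max C₀' 0 with hC₀def
  have hC₀ : ∀ n, ‖(l n).1‖ ≤ C₀ ∧ ‖(l n).2‖ ≤ C₀ := fun n =>
    ⟨(hC₀' n).1.trans (le_max_left _ _), (hC₀' n).2.trans (le_max_left _ _)⟩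
  have hC₀0 : (0:ℝ) ≤ C₀ := le_max_right _ _
  have hτ0 : (0:ℝ) < τ 0 := hτpos 0
  have hτinvle : ∀ n, (τ n)⁻¹ ≤ (τ 0)⁻¹ := fun n =>
    inv_anti₀ hτ0 (hτmono (Nat.zero_le n))
  obtain ⟨g₁, hg₁⟩ := exists_inv S₁ hS₁
  obtain ⟨g₂, hg₂⟩ := exists_inv S₂ hS₂
  have hT₁c : Continuous (Matrix.toEuclideanLin S₁) :=
    LinearMap.continuous_of_finiteDimensional _
  have hT₂c : Continuous (Matrix.toEuclideanLin S₂) :=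
    LinearMap.continuous_of_finiteDimensional _
  -- residuals
  have hres : ∀ n, (Matrix.toEuclideanLin S₁ (x (n+1)).1 - (y (n+1)).1 - c₁
        = (τ n)⁻¹ • ((l n).1 - (l (n+1)).1)) ∧
      (Matrix.toEuclideanLin S₂ (x (n+1)).2 - (y (n+1)).2 - c₂
        = (τ n)⁻¹ • ((l n).2 - (l (n+1)).2)) := by
    intro n
    constructor
    · have h2 : τ n • (Matrix.toEuclideanLin S₁ (x (n+1)).1 - (y (n+1)).1 - c₁)
          = (l n).1 - (l (n+1)).1 := by rw [(hl n).1]; module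
      rw [← h2, smul_smul, inv_mul_cancel₀ (hτpos n).ne', one_smul]
    · have h2 : τ n • (Matrix.toEuclideanLin S₂ (x (n+1)).2 - (y (n+1)).2 - c₂)
          = (l n).2 - (l (n+1)).2 := by rw [(hl n).2]; module
      rw [← h2, smul_smul, inv_mul_cancel₀ (hτpos n).ne', one_smul]
  have hresnorm : ∀ n, ‖Matrix.toEuclideanLin S₁ (x (n+1)).1 - (y (n+1)).1 - c₁‖
        ≤ (τ n)⁻¹ * (2 * C₀) ∧
      ‖Matrix.toEuclideanLin S₂ (x (n+1)).2 - (y (n+1)).2 - c₂‖ ≤ (τ n)⁻¹ * (2 * C₀) := by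
    intro n
    have hτinv : (0:ℝ) < (τ n)⁻¹ := inv_pos.mpr (hτpos n)
    constructor
    · rw [(hres n).1, norm_smul, Real.norm_eq_abs, abs_of_pos hτinv]
      refine mul_le_mul_of_nonneg_left ?_ hτinv.le
      calc ‖(l n).1 - (l (n+1)).1‖ ≤ ‖(l n).1‖ + ‖(l (n+1)).1‖ := norm_sub_le _ _
        _ ≤ 2 * C₀ := by have h1 := (hC₀ n).1; have h2 := (hC₀ (n+1)).1; linarith
    · rw [(hres n).2, norm_smul, Real.norm_eq_abs, abs_of_pos hτinv]
      refine mul_le_mul_of_nonneg_left ?_ hτinv.le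
      calc ‖(l n).2 - (l (n+1)).2‖ ≤ ‖(l n).2‖ + ‖(l (n+1)).2‖ := norm_sub_le _ _
        _ ≤ 2 * C₀ := by have h1 := (hC₀ n).2; have h2 := (hC₀ (n+1)).2; linarith
  have hynorm : ∀ n, ‖(y (n+1)).1‖ = 1 ∧ ‖(y (n+1)).2‖ = 1 := fun n =>
    ⟨(hy n).1.1, (hy n).2.1⟩
  -- boundedness of x
  set B₁ : ℝ := 1 + ‖c₁‖ + (τ 0)⁻¹ * (2 * C₀) with hB₁def
  set B₂ : ℝ := 1 + ‖c₂‖ + (τ 0)⁻¹ * (2 * C₀) with hB₂def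
  have hTx₁ : ∀ n, ‖Matrix.toEuclideanLin S₁ (x (n+1)).1‖ ≤ B₁ := by
    intro n
    have hid : Matrix.toEuclideanLin S₁ (x (n+1)).1
        = (Matrix.toEuclideanLin S₁ (x (n+1)).1 - (y (n+1)).1 - c₁) + (y (n+1)).1 + c₁ := by
      module
    have h1 := (hresnorm n).1
    have h2 : (τ n)⁻¹ * (2 * C₀) ≤ (τ 0)⁻¹ * (2 * C₀) :=
      mul_le_mul_of_nonneg_right (hτinvle n) (by linarith)
    have h3 := (hynorm n).1
    calc ‖Matrix.toEuclideanLin S₁ (x (n+1)).1‖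
        = ‖(Matrix.toEuclideanLin S₁ (x (n+1)).1 - (y (n+1)).1 - c₁) + (y (n+1)).1 + c₁‖ := by
          rw [← hid]
      _ ≤ ‖Matrix.toEuclideanLin S₁ (x (n+1)).1 - (y (n+1)).1 - c₁‖ + ‖(y (n+1)).1‖ + ‖c₁‖ :=
          norm_add₃_le
      _ ≤ B₁ := by rw [hB₁def]; linarith
  have hTx₂ : ∀ n, ‖Matrix.toEuclideanLin S₂ (x (n+1)).2‖ ≤ B₂ := by
    intro n
    have hid : Matrix.toEuclideanLin S₂ (x (n+1)).2
        = (Matrix.toEuclideanLin S₂ (x (n+1)).2 - (y (n+1)).2 - c₂) + (y (n+1)).2 + c₂ := by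
      module
    have h1 := (hresnorm n).2
    have h2 : (τ n)⁻¹ * (2 * C₀) ≤ (τ 0)⁻¹ * (2 * C₀) :=
      mul_le_mul_of_nonneg_right (hτinvle n) (by linarith)
    have h3 := (hynorm n).2
    calc ‖Matrix.toEuclideanLin S₂ (x (n+1)).2‖
        = ‖(Matrix.toEuclideanLin S₂ (x (n+1)).2 - (y (n+1)).2 - c₂) + (y (n+1)).2 + c₂‖ := by
          rw [← hid]
      _ ≤ ‖Matrix.toEuclideanLin S₂ (x (n+1)).2 - (y (n+1)).2 - c₂‖ + ‖(y (n+1)).2‖ + ‖c₂‖ :=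
          norm_add₃_le
      _ ≤ B₂ := by rw [hB₂def]; linarith
  have hx₁ : ∀ n, ‖(x (n+1)).1‖ ≤ ‖g₁‖ * B₁ := by
    intro n
    calc ‖(x (n+1)).1‖ = ‖g₁ (Matrix.toEuclideanLin S₁ (x (n+1)).1)‖ :=
          (congrArg norm (hg₁ (x (n+1)).1)).symm
      _ ≤ ‖g₁‖ * ‖Matrix.toEuclideanLin S₁ (x (n+1)).1‖ := g₁.le_opNorm _
      _ ≤ ‖g₁‖ * B₁ := mul_le_mul_of_nonneg_left (hTx₁ n) (norm_nonneg _)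
  have hx₂ : ∀ n, ‖(x (n+1)).2‖ ≤ ‖g₂‖ * B₂ := by
    intro n
    calc ‖(x (n+1)).2‖ = ‖g₂ (Matrix.toEuclideanLin S₂ (x (n+1)).2)‖ :=
          (congrArg norm (hg₂ (x (n+1)).2)).symm
      _ ≤ ‖g₂‖ * ‖Matrix.toEuclideanLin S₂ (x (n+1)).2‖ := g₂.le_opNorm _
      _ ≤ ‖g₂‖ * B₂ := mul_le_mul_of_nonneg_left (hTx₂ n) (norm_nonneg _)
  set Cb : ℝ := max (max (max ‖(x 0).1‖ ‖(x 0).2‖) (max ‖(y 0).1‖ ‖(y 0).2‖))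
      (max (max (‖g₁‖ * B₁) (‖g₂‖ * B₂)) 1) with hCbdef
  have hbound : ∀ n, ‖(x n).1‖ ≤ Cb ∧ ‖(x n).2‖ ≤ Cb ∧ ‖(y n).1‖ ≤ Cb ∧ ‖(y n).2‖ ≤ Cb := by
    intro n
    match n with
    | 0 =>
      exact ⟨le_max_of_le_left (le_max_of_le_left (le_max_left _ _)),
        le_max_of_le_left (le_max_of_le_left (le_max_right _ _)),
        le_max_of_le_left (le_max_of_le_right (le_max_left _ _)),
        le_max_of_le_left (le_max_of_le_right (le_max_right _ _))⟩
    | Nat.succ m =>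
      refine ⟨(hx₁ m).trans ?_, (hx₂ m).trans ?_,
        le_of_eq_of_le (hynorm m).1 ?_, le_of_eq_of_le (hynorm m).2 ?_⟩
      · exact le_max_of_le_right (le_max_of_le_left (le_max_left _ _))
      · exact le_max_of_le_right (le_max_of_le_left (le_max_right _ _))
      · exact le_max_of_le_right (le_max_right _ _)
      · exact le_max_of_le_right (le_max_right _ _)
  -- residual tends to zero
  have hinv0 : Tendsto (fun n => (τ n)⁻¹ * (2 * C₀)) atTop (nhds 0) := by
    have h := hτtop.inv_tendsto_atTop.mul_const (2 * C₀)
    simpa using h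
  have hA0 : Tendsto (fun n => Matrix.toEuclideanLin S₁ (x (n+1)).1 - (y (n+1)).1 - c₁)
      atTop (nhds 0) := squeeze_zero_norm (fun n => (hresnorm n).1) hinv0
  have hB0 : Tendsto (fun n => Matrix.toEuclideanLin S₂ (x (n+1)).2 - (y (n+1)).2 - c₂)
      atTop (nhds 0) := squeeze_zero_norm (fun n => (hresnorm n).2) hinv0
  -- feasibility of limit points
  have hfeas : ∀ (xs ys : EuclideanSpace ℝ (Fin d) × EuclideanSpace ℝ (Fin d)) (φ : ℕ → ℕ),
      StrictMono φ →
      Tendsto (fun k => (x (φ k), y (φ k))) atTop (nhds (xs, ys)) →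
      (Matrix.toEuclideanLin S₁ xs.1 - ys.1 = c₁ ∧
        Matrix.toEuclideanLin S₂ xs.2 - ys.2 = c₂ ∧ ‖ys.1‖ = 1 ∧ ‖ys.2‖ = 1) := by
    intro xs ys φ hφ hconv
    have hφ' : Tendsto (fun k => φ k - 1) atTop atTop :=
      tendsto_atTop_mono (fun k => Nat.sub_le_sub_right hφ.le_apply 1) (tendsto_sub_atTop_nat 1)
    have hφ1 : ∀ᶠ k in atTop, φ k - 1 + 1 = φ k :=
      (eventually_ge_atTop 1).mono fun k hk => Nat.succ_pred_eq_of_pos (hk.trans hφ.le_apply)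
    have hxt : Tendsto (fun k => x (φ k)) atTop (nhds xs) :=
      (continuous_fst.tendsto _).comp hconv
    have hyt : Tendsto (fun k => y (φ k)) atTop (nhds ys) :=
      (continuous_snd.tendsto _).comp hconv
    have hx1t : Tendsto (fun k => (x (φ k)).1) atTop (nhds xs.1) :=
      (continuous_fst.tendsto _).comp hxt
    have hx2t : Tendsto (fun k => (x (φ k)).2) atTop (nhds xs.2) :=
      (continuous_snd.tendsto _).comp hxt
    have hy1t : Tendsto (fun k => (y (φ k)).1) atTop (nhds ys.1) :=
      (continuous_fst.tendsto _).comp hyt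
    have hy2t : Tendsto (fun k => (y (φ k)).2) atTop (nhds ys.2) :=
      (continuous_snd.tendsto _).comp hyt
    have lim1 : Tendsto (fun k => Matrix.toEuclideanLin S₁ (x (φ k)).1 - (y (φ k)).1 - c₁)
        atTop (nhds (Matrix.toEuclideanLin S₁ xs.1 - ys.1 - c₁)) :=
      (((hT₁c.tendsto _).comp hx1t).sub hy1t).sub tendsto_const_nhds
    have lim1' : Tendsto (fun k => Matrix.toEuclideanLin S₁ (x (φ k)).1 - (y (φ k)).1 - c₁)
        atTop (nhds 0) :=
      ((hA0.comp hφ').congr' (hφ1.mono fun k hk => by simp only [Function.comp_apply]; rw [hk]))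
    have e1 : Matrix.toEuclideanLin S₁ xs.1 - ys.1 - c₁ = 0 := tendsto_nhds_unique lim1 lim1'
    have lim2 : Tendsto (fun k => Matrix.toEuclideanLin S₂ (x (φ k)).2 - (y (φ k)).2 - c₂)
        atTop (nhds (Matrix.toEuclideanLin S₂ xs.2 - ys.2 - c₂)) :=
      (((hT₂c.tendsto _).comp hx2t).sub hy2t).sub tendsto_const_nhds
    have lim2' : Tendsto (fun k => Matrix.toEuclideanLin S₂ (x (φ k)).2 - (y (φ k)).2 - c₂)
        atTop (nhds 0) :=
      ((hB0.comp hφ').congr' (hφ1.mono fun k hk => by simp only [Function.comp_apply]; rw [hk]))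
    have e2 : Matrix.toEuclideanLin S₂ xs.2 - ys.2 - c₂ = 0 := tendsto_nhds_unique lim2 lim2'
    have e3 : ‖ys.1‖ = 1 := by
      refine tendsto_nhds_unique hy1t.norm (tendsto_const_nhds.congr' ?_)
      exact hφ1.mono fun k hk => by show (1:ℝ) = ‖(y (φ k)).1‖; rw [← hk]; exact ((hynorm (φ k - 1)).1).symm
    have e4 : ‖ys.2‖ = 1 := by
      refine tendsto_nhds_unique hy2t.norm (tendsto_const_nhds.congr' ?_)
      exact hφ1.mono fun k hk => by show (1:ℝ) = ‖(y (φ k)).2‖; rw [← hk]; exact ((hynorm (φ k - 1)).2).symm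
    exact ⟨sub_eq_zero.mp e1, sub_eq_zero.mp e2, e3, e4⟩
  refine ⟨⟨⟨Cb, hbound⟩, hfeas⟩, ?_⟩
  -- key identities
  have hkey : ∀ n, ((x (n+1)).1 - (x (n+1)).2 - Matrix.toEuclideanLin S₁ (l (n+1)).1
        = Matrix.toEuclideanLin S₁ (τ n • ((y n).1 - (y (n+1)).1))) ∧
      ((x (n+1)).2 - (x (n+1)).1 - Matrix.toEuclideanLin S₂ (l (n+1)).2
        = Matrix.toEuclideanLin S₂ (τ n • ((y n).2 - (y (n+1)).2))) := by
    intro n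
    constructor
    · exact key1 Q₁ S₁ hS₁Q (τ n) (x (n+1)).1 (x (n+1)).2 (y n).1 (y (n+1)).1
        (l n).1 (l (n+1)).1 c₁ (hx n).1 (hl n).1
    · refine key1 Q₂ S₂ hS₂Q (τ n) (x (n+1)).2 (x (n+1)).1 (y n).2 (y (n+1)).2
        (l n).2 (l (n+1)).2 c₂ ?_ (hl n).2
      linear_combination (norm := module) (hx n).2
  have hcol : ∀ n, ((l (n+1)).1 = (inner ℝ (y (n+1)).1 (l (n+1)).1 : ℝ) • (y (n+1)).1) ∧
      ((l (n+1)).2 = (inner ℝ (y (n+1)).2 (l (n+1)).2 : ℝ) • (y (n+1)).2) := by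
    intro n
    exact ⟨collin S₁ (τ n) (hτpos n) (x (n+1)).1 (y (n+1)).1 (l n).1 (l (n+1)).1 c₁
        (hy n).1.1 (hy n).1.2 (hl n).1,
      collin S₂ (τ n) (hτpos n) (x (n+1)).2 (y (n+1)).2 (l n).2 (l (n+1)).2 c₂
        (hy n).2.1 (hy n).2.2 (hl n).2⟩
  constructor
  · -- KKT at limit points → τ‖Δy‖ → 0
    intro hKKT
    apply tendsto_of_subseq_tendsto
    intro ns hns
    obtain ⟨g, hgmono, hnsg⟩ := exists_strictMono_comp hns
    have hwmem : ∀ k, (x (ns (g k) + 1), y (ns (g k) + 1), l (ns (g k) + 1)) ∈ Metric.closedBall (0 : (EuclideanSpace ℝ (Fin d) ×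
        EuclideanSpace ℝ (Fin d)) × (EuclideanSpace ℝ (Fin d) × EuclideanSpace ℝ (Fin d)) ×
        (EuclideanSpace ℝ (Fin d) × EuclideanSpace ℝ (Fin d))) (max Cb C₀) := by
      intro k
      rw [Metric.mem_closedBall, dist_zero_right]
      have h1 : ‖x (ns (g k) + 1)‖ ≤ Cb := by
        rw [Prod.norm_def]; exact max_le (hbound _).1 (hbound _).2.1
      have h2 : ‖y (ns (g k) + 1)‖ ≤ Cb := by
        rw [Prod.norm_def]; exact max_le (hbound _).2.2.1 (hbound _).2.2.2
      have h3 : ‖l (ns (g k) + 1)‖ ≤ C₀ := by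
        rw [Prod.norm_def]; exact max_le (hC₀ _).1 (hC₀ _).2
      rw [Prod.norm_def, Prod.norm_def]
      exact max_le (h1.trans (le_max_left _ _))
        (max_le (h2.trans (le_max_left _ _)) (h3.trans (le_max_right _ _)))
    obtain ⟨p, -, ms, hms, hconv⟩ :=
      (isCompact_closedBall (0 : (EuclideanSpace ℝ (Fin d) × EuclideanSpace ℝ (Fin d)) ×
        (EuclideanSpace ℝ (Fin d) × EuclideanSpace ℝ (Fin d)) ×
        (EuclideanSpace ℝ (Fin d) × EuclideanSpace ℝ (Fin d))) (max Cb C₀)).tendsto_subseq hwmem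
    obtain ⟨xs, ys, ls⟩ := p
    set φ : ℕ → ℕ := fun k => ns (g (ms k)) + 1 with hφdef
    have hφmono : StrictMono φ := fun a b hab =>
      Nat.succ_lt_succ (hnsg (hms hab))
    have hconv' : Tendsto (fun k => (x (φ k), y (φ k), l (φ k))) atTop (nhds (xs, ys, ls)) :=
      hconv
    obtain ⟨e1, e2, -, -, -, -, -, -⟩ := hKKT xs ys ls φ hφmono hconv'
    have hxt : Tendsto (fun k => x (φ k)) atTop (nhds xs) :=
      (continuous_fst.tendsto _).comp hconv'
    have hylt : Tendsto (fun k => (y (φ k), l (φ k))) atTop (nhds (ys, ls)) :=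
      (continuous_snd.tendsto _).comp hconv'
    have hlt : Tendsto (fun k => l (φ k)) atTop (nhds ls) :=
      (continuous_snd.tendsto _).comp hylt
    have hx1t : Tendsto (fun k => (x (φ k)).1) atTop (nhds xs.1) :=
      (continuous_fst.tendsto _).comp hxt
    have hx2t : Tendsto (fun k => (x (φ k)).2) atTop (nhds xs.2) :=
      (continuous_snd.tendsto _).comp hxt
    have hl1t : Tendsto (fun k => (l (φ k)).1) atTop (nhds ls.1) :=
      (continuous_fst.tendsto _).comp hlt
    have hl2t : Tendsto (fun k => (l (φ k)).2) atTop (nhds ls.2) :=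
      (continuous_snd.tendsto _).comp hlt
    have L1 : Tendsto (fun k => (x (φ k)).1 - (x (φ k)).2 -
        Matrix.toEuclideanLin S₁ (l (φ k)).1) atTop (nhds 0) := by
      have h := (hx1t.sub hx2t).sub ((hT₁c.tendsto _).comp hl1t)
      rwa [e1] at h
    have L2 : Tendsto (fun k => (x (φ k)).2 - (x (φ k)).1 -
        Matrix.toEuclideanLin S₂ (l (φ k)).2) atTop (nhds 0) := by
      have h := (hx2t.sub hx1t).sub ((hT₂c.tendsto _).comp hl2t)
      rwa [e2] at h
    have L1' : Tendsto (fun k => Matrix.toEuclideanLin S₁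
        (τ (ns (g (ms k))) • ((y (ns (g (ms k)))).1 - (y (ns (g (ms k)) + 1)).1)))
        atTop (nhds 0) := L1.congr fun k => (hkey (ns (g (ms k)))).1
    have L2' : Tendsto (fun k => Matrix.toEuclideanLin S₂
        (τ (ns (g (ms k))) • ((y (ns (g (ms k)))).2 - (y (ns (g (ms k)) + 1)).2)))
        atTop (nhds 0) := L2.congr fun k => (hkey (ns (g (ms k)))).2
    have U1 : Tendsto (fun k => τ (ns (g (ms k))) •
        ((y (ns (g (ms k)))).1 - (y (ns (g (ms k)) + 1)).1)) atTop (nhds 0) := by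
      have h := (g₁.continuous.tendsto 0).comp L1'
      simp only [Function.comp_def, hg₁, map_zero] at h
      exact h
    have U2 : Tendsto (fun k => τ (ns (g (ms k))) •
        ((y (ns (g (ms k)))).2 - (y (ns (g (ms k)) + 1)).2)) atTop (nhds 0) := by
      have h := (g₂.continuous.tendsto 0).comp L2'
      simp only [Function.comp_def, hg₂, map_zero] at h
      exact h
    have N1 : Tendsto (fun k => τ (ns (g (ms k))) *
        ‖(y (ns (g (ms k)) + 1)).1 - (y (ns (g (ms k)))).1‖) atTop (nhds 0) := by
      have h := U1.norm
      rw [norm_zero] at h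
      refine h.congr fun k => ?_
      rw [norm_smul, Real.norm_eq_abs, abs_of_pos (hτpos _), norm_sub_rev]
    have N2 : Tendsto (fun k => τ (ns (g (ms k))) *
        ‖(y (ns (g (ms k)) + 1)).2 - (y (ns (g (ms k)))).2‖) atTop (nhds 0) := by
      have h := U2.norm
      rw [norm_zero] at h
      refine h.congr fun k => ?_
      rw [norm_smul, Real.norm_eq_abs, abs_of_pos (hτpos _), norm_sub_rev]
    refine ⟨fun k => g (ms k), ?_⟩
    have hsum : Tendsto (fun k => τ (ns (g (ms k))) *
          ‖(y (ns (g (ms k)) + 1)).1 - (y (ns (g (ms k)))).1‖ +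
        τ (ns (g (ms k))) * ‖(y (ns (g (ms k)) + 1)).2 - (y (ns (g (ms k)))).2‖)
        atTop (nhds 0) := by
      have h := N1.add N2
      rwa [add_zero] at h
    refine squeeze_zero (fun k => mul_nonneg (hτpos _).le (Real.sqrt_nonneg _))
      (fun k => ?_) hsum
    have hb := sqrt_sq_add_sq_le (norm_nonneg ((y (ns (g (ms k)) + 1)).1 - (y (ns (g (ms k)))).1))
      (norm_nonneg ((y (ns (g (ms k)) + 1)).2 - (y (ns (g (ms k)))).2))
    calc τ (ns (g (ms k))) * Real.sqrt (‖(y (ns (g (ms k)) + 1)).1 - (y (ns (g (ms k)))).1‖ ^ 2 +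
          ‖(y (ns (g (ms k)) + 1)).2 - (y (ns (g (ms k)))).2‖ ^ 2)
        ≤ τ (ns (g (ms k))) * (‖(y (ns (g (ms k)) + 1)).1 - (y (ns (g (ms k)))).1‖ +
          ‖(y (ns (g (ms k)) + 1)).2 - (y (ns (g (ms k)))).2‖) :=
          mul_le_mul_of_nonneg_left hb (hτpos _).le
      _ = _ := by ring
  · -- τ‖Δy‖ → 0 → KKT at limit points
    intro htend xs ys ls φ hφ hconv
    have hφ' : Tendsto (fun k => φ k - 1) atTop atTop :=
      tendsto_atTop_mono (fun k => Nat.sub_le_sub_right hφ.le_apply 1) (tendsto_sub_atTop_nat 1)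
    have hφ1 : ∀ᶠ k in atTop, φ k - 1 + 1 = φ k :=
      (eventually_ge_atTop 1).mono fun k hk => Nat.succ_pred_eq_of_pos (hk.trans hφ.le_apply)
    have hxt : Tendsto (fun k => x (φ k)) atTop (nhds xs) :=
      (continuous_fst.tendsto _).comp hconv
    have hylt : Tendsto (fun k => (y (φ k), l (φ k))) atTop (nhds (ys, ls)) :=
      (continuous_snd.tendsto _).comp hconv
    have hyt : Tendsto (fun k => y (φ k)) atTop (nhds ys) :=
      (continuous_fst.tendsto _).comp hylt
    have hlt : Tendsto (fun k => l (φ k)) atTop (nhds ls) :=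
      (continuous_snd.tendsto _).comp hylt
    have hx1t : Tendsto (fun k => (x (φ k)).1) atTop (nhds xs.1) :=
      (continuous_fst.tendsto _).comp hxt
    have hx2t : Tendsto (fun k => (x (φ k)).2) atTop (nhds xs.2) :=
      (continuous_snd.tendsto _).comp hxt
    have hy1t : Tendsto (fun k => (y (φ k)).1) atTop (nhds ys.1) :=
      (continuous_fst.tendsto _).comp hyt
    have hy2t : Tendsto (fun k => (y (φ k)).2) atTop (nhds ys.2) :=
      (continuous_snd.tendsto _).comp hyt
    have hl1t : Tendsto (fun k => (l (φ k)).1) atTop (nhds ls.1) :=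
      (continuous_fst.tendsto _).comp hlt
    have hl2t : Tendsto (fun k => (l (φ k)).2) atTop (nhds ls.2) :=
      (continuous_snd.tendsto _).comp hlt
    obtain ⟨f1, f2, f3, f4⟩ := hfeas xs ys φ hφ (hxt.prodMk_nhds hyt)
    -- τ-scaled increments tend to 0
    have hd1 : Tendsto (fun n => τ n • ((y n).1 - (y (n+1)).1)) atTop (nhds 0) := by
      refine squeeze_zero_norm (fun n => ?_) htend
      rw [norm_smul, Real.norm_eq_abs, abs_of_pos (hτpos n), norm_sub_rev]
      exact mul_le_mul_of_nonneg_left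
        (le_sqrt_sq_add_sq_left _ _ (norm_nonneg _)) (hτpos n).le
    have hd2 : Tendsto (fun n => τ n • ((y n).2 - (y (n+1)).2)) atTop (nhds 0) := by
      refine squeeze_zero_norm (fun n => ?_) htend
      rw [norm_smul, Real.norm_eq_abs, abs_of_pos (hτpos n), norm_sub_rev]
      exact mul_le_mul_of_nonneg_left
        (le_sqrt_sq_add_sq_right _ _ (norm_nonneg _)) (hτpos n).le
    have h01 : Tendsto (fun n => (x (n+1)).1 - (x (n+1)).2 -
        Matrix.toEuclideanLin S₁ (l (n+1)).1) atTop (nhds 0) := by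
      have h := (hT₁c.tendsto 0).comp hd1
      rw [map_zero] at h
      exact h.congr fun n => ((hkey n).1).symm
    have h02 : Tendsto (fun n => (x (n+1)).2 - (x (n+1)).1 -
        Matrix.toEuclideanLin S₂ (l (n+1)).2) atTop (nhds 0) := by
      have h := (hT₂c.tendsto 0).comp hd2
      rw [map_zero] at h
      exact h.congr fun n => ((hkey n).2).symm
    have hW1 : Tendsto (fun k => (x (φ k)).1 - (x (φ k)).2 -
        Matrix.toEuclideanLin S₁ (l (φ k)).1) atTop (nhds 0) :=
      ((h01.comp hφ').congr' (hφ1.mono fun k hk => by simp only [Function.comp_apply]; rw [hk]))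
    have hW2 : Tendsto (fun k => (x (φ k)).2 - (x (φ k)).1 -
        Matrix.toEuclideanLin S₂ (l (φ k)).2) atTop (nhds 0) :=
      ((h02.comp hφ').congr' (hφ1.mono fun k hk => by simp only [Function.comp_apply]; rw [hk]))
    have e1 : xs.1 - xs.2 - Matrix.toEuclideanLin S₁ ls.1 = 0 :=
      tendsto_nhds_unique ((hx1t.sub hx2t).sub ((hT₁c.tendsto _).comp hl1t)) hW1
    have e2 : xs.2 - xs.1 - Matrix.toEuclideanLin S₂ ls.2 = 0 :=
      tendsto_nhds_unique ((hx2t.sub hx1t).sub ((hT₂c.tendsto _).comp hl2t)) hW2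
    have hM1 : Tendsto (fun k => (l (φ k)).1 -
        (inner ℝ (y (φ k)).1 (l (φ k)).1 : ℝ) • (y (φ k)).1)
        atTop (nhds (ls.1 - (inner ℝ ys.1 ls.1 : ℝ) • ys.1)) :=
      hl1t.sub ((hy1t.inner hl1t).smul hy1t)
    have hM1' : Tendsto (fun k => (l (φ k)).1 -
        (inner ℝ (y (φ k)).1 (l (φ k)).1 : ℝ) • (y (φ k)).1) atTop (nhds 0) := by
      refine tendsto_const_nhds.congr' (hφ1.mono fun k hk => ?_)
      have h := (hcol (φ k - 1)).1
      rw [hk] at h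
      exact (sub_eq_zero.mpr h).symm
    have e3 : ls.1 - (inner ℝ ys.1 ls.1 : ℝ) • ys.1 = 0 := tendsto_nhds_unique hM1 hM1'
    have hM2 : Tendsto (fun k => (l (φ k)).2 -
        (inner ℝ (y (φ k)).2 (l (φ k)).2 : ℝ) • (y (φ k)).2)
        atTop (nhds (ls.2 - (inner ℝ ys.2 ls.2 : ℝ) • ys.2)) :=
      hl2t.sub ((hy2t.inner hl2t).smul hy2t)
    have hM2' : Tendsto (fun k => (l (φ k)).2 -
        (inner ℝ (y (φ k)).2 (l (φ k)).2 : ℝ) • (y (φ k)).2) atTop (nhds 0) := by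
      refine tendsto_const_nhds.congr' (hφ1.mono fun k hk => ?_)
      have h := (hcol (φ k - 1)).2
      rw [hk] at h
      exact (sub_eq_zero.mpr h).symm
    have e4 : ls.2 - (inner ℝ ys.2 ls.2 : ℝ) • ys.2 = 0 := tendsto_nhds_unique hM2 hM2'
    refine ⟨e1, e2, ⟨-(inner ℝ ys.1 ls.1 : ℝ), ?_⟩, ⟨-(inner ℝ ys.2 ls.2 : ℝ), ?_⟩,
      f1, f2, f3, f4⟩
    · rw [neg_smul, ← sub_eq_add_neg]; exact e3
    · rw [neg_smul, ← sub_eq_add_neg]; exact e4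
end
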